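/- arXiv:1403.7491 — 2 statements merged into one kernel-verified Lean document; each statement's English description precedes it below -/
import Mathlib

section
/- For all x ∈ (-1,1), one has ∫_{-1}^{1} G(x,y) dy = √(1-x²). -/
open MeasureTheory Set intervalIntegral

/-- The Green function of the square root of the Laplacian on `(-1,1)`
with homogeneous Dirichlet exterior condition. -/
noncomputable def G (x y : ℝ) : ℝ :=
  if x ∈ Set.Ioo (-1:ℝ) 1 ∧ y ∈ Set.Ioo (-1:ℝ) 1 then
    (1 / Real.pi) * Real.log ((1 - x*y + Real.sqrt ((1 - x^2) * (1 - y^2))) / |x - y|)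
  else 0

noncomputable def Haux (x y : ℝ) : ℝ :=
  ((y - x) * Real.log (1 - x*y + Real.sqrt ((1 - x^2) * (1 - y^2)))
    - (y - x) * Real.log (y - x) - Real.sqrt (1 - x^2) * Real.arccos y) / Real.pi

lemma logInt {c : ℝ} (hc : 0 ≤ c) : IntervalIntegrable Real.log volume 0 c := by
  rw [intervalIntegrable_iff_integrableOn_Ioc_of_le hc]
  have hg : IntegrableOn (fun y : ℝ => 2 * y ^ (-(1/2) : ℝ) + y) (Ioc 0 c) volume := by
    have h1 : IntervalIntegrable (fun y : ℝ => y ^ (-(1/2) : ℝ)) volume 0 c :=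
      intervalIntegral.intervalIntegrable_rpow' (by norm_num)
    have h2 : IntervalIntegrable (fun y : ℝ => 2 * y ^ (-(1/2) : ℝ) + y) volume 0 c :=
      (h1.const_mul 2).add (continuous_id.intervalIntegrable 0 c)
    rwa [intervalIntegrable_iff_integrableOn_Ioc_of_le hc] at h2
  refine hg.integrable.mono Real.measurable_log.aestronglyMeasurable ?_
  refine (ae_restrict_iff' measurableSet_Ioc).2 (Filter.Eventually.of_forall fun y hy => ?_)
  have hy0 : 0 < y := hy.1
  have hsy : 0 < Real.sqrt y := Real.sqrt_pos.2 hy0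
  have hrw : y ^ (-(1/2) : ℝ) = (Real.sqrt y)⁻¹ := by
    rw [Real.rpow_neg hy0.le, Real.sqrt_eq_rpow]
  have hb : |Real.log y| ≤ 2 * y ^ (-(1/2) : ℝ) + y := by
    rcases abs_cases (Real.log y) with ⟨h, _⟩ | ⟨h, _⟩
    · rw [h]
      have := Real.log_le_sub_one_of_pos hy0
      have : Real.log y ≤ y := by linarith
      nlinarith [Real.rpow_nonneg hy0.le (-(1/2) : ℝ)]
    · rw [h, hrw]
      have h3 : Real.log ((Real.sqrt y)⁻¹) ≤ (Real.sqrt y)⁻¹ - 1 :=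
        Real.log_le_sub_one_of_pos (by positivity)
      rw [Real.log_inv, Real.log_sqrt hy0.le] at h3
      nlinarith
  have hrhs : 0 ≤ 2 * y ^ (-(1/2) : ℝ) + y := by positivity
  calc ‖Real.log y‖ = |Real.log y| := rfl
    _ ≤ 2 * y ^ (-(1/2) : ℝ) + y := hb
    _ ≤ ‖2 * y ^ (-(1/2) : ℝ) + y‖ := le_abs_self _

lemma logIntNeg {c : ℝ} (hc : c ≤ 0) : IntervalIntegrable Real.log volume c 0 := by
  have l1 : IntervalIntegrable Real.log volume 0 (-c) := logInt (by linarith)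
  have l2 : IntervalIntegrable (fun t => Real.log (-t)) volume (-0) (-(-c)) :=
    (IntervalIntegrable.iff_comp_neg (f := Real.log) (a := 0) (b := -c) enorm_ne_top).mp l1
  have l3 : IntervalIntegrable Real.log volume 0 c := by
    simpa [Real.log_neg_eq_log] using l2
  exact l3.symm

lemma logShift {x a b : ℝ} (hab : a ≤ b) (hx : a ≤ x) (hx' : x ≤ b) :
    IntervalIntegrable (fun y => Real.log (y - x)) volume a b := by
  have l1 : IntervalIntegrable Real.log volume (a - x) 0 := logIntNeg (by linarith)
  have l2 : IntervalIntegrable Real.log volume 0 (b - x) := logInt (by linarith)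
  have l3 : IntervalIntegrable Real.log volume (a - x) (b - x) := l1.trans l2
  have l4 := l3.comp_sub_right x
  have e1 : a - x + x = a := by ring
  have e2 : b - x + x = b := by ring
  rwa [e1, e2] at l4

lemma Apos {x y : ℝ} (hx : x ∈ Set.Ioo (-1:ℝ) 1) (hy : y ∈ Set.Icc (-1:ℝ) 1) :
    0 < 1 - x*y + Real.sqrt ((1 - x^2) * (1 - y^2)) := by
  have h1 : |x*y| ≤ |x| := by
    rw [abs_mul]
    exact mul_le_of_le_one_right (abs_nonneg x) (abs_le.2 ⟨hy.1, hy.2⟩)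
  have h2 : |x| < 1 := abs_lt.2 ⟨hx.1, hx.2⟩
  have h3 := (abs_le.1 h1).2
  have := Real.sqrt_nonneg ((1 - x^2) * (1 - y^2))
  linarith


lemma Geq {x y : ℝ} (hx : x ∈ Set.Ioo (-1:ℝ) 1) (hy : y ∈ Set.Ioo (-1:ℝ) 1) (hxy : y ≠ x) :
    G x y = (1 / Real.pi) * (Real.log (1 - x*y + Real.sqrt ((1 - x^2) * (1 - y^2)))
      - Real.log (y - x)) := by
  rw [G, if_pos ⟨hx, hy⟩, Real.log_div (Apos hx (Ioo_subset_Icc_self hy)).ne'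
    (abs_ne_zero.2 (sub_ne_zero.2 fun h => hxy h.symm)), abs_sub_comm, Real.log_abs]

lemma contLogA {x : ℝ} (hx : x ∈ Set.Ioo (-1:ℝ) 1) :
    ContinuousOn (fun y : ℝ => Real.log (1 - x*y + Real.sqrt ((1 - x^2) * (1 - y^2))))
      (Set.Icc (-1:ℝ) 1) := by
  refine ContinuousOn.log ?_ ?_
  · exact ((continuous_const.sub (continuous_const.mul continuous_id)).add
      (Real.continuous_sqrt.comp (by continuity))).continuousOn
  · exact fun y hy => (Apos hx hy).ne'

lemma Gint {x a b : ℝ} (hx : x ∈ Set.Ioo (-1:ℝ) 1) (hab : a ≤ b) (ha : -1 ≤ a) (hb : b ≤ 1)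
    (hax : a ≤ x) (hxb : x ≤ b) (hne : ∀ y ∈ Set.Ioo a b, y ≠ x) :
    IntervalIntegrable (fun y => G x y) volume a b := by
  have hφ : IntervalIntegrable (fun y => (1 / Real.pi) *
      (Real.log (1 - x*y + Real.sqrt ((1 - x^2) * (1 - y^2))) - Real.log (y - x)))
      volume a b := by
    refine IntervalIntegrable.const_mul ?_ _
    refine IntervalIntegrable.sub ?_ (logShift hab hax hxb)
    refine ContinuousOn.intervalIntegrable ((contLogA hx).mono ?_)
    rw [uIcc_of_le hab]
    exact Icc_subset_Icc ha hb
  rw [intervalIntegrable_iff_integrableOn_Ioc_of_le hab,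
    integrableOn_Ioc_iff_integrableOn_Ioo] at hφ ⊢
  refine hφ.congr ?_
  filter_upwards [ae_restrict_mem measurableSet_Ioo] with y hy
  exact (Geq hx ⟨lt_of_le_of_lt ha hy.1, lt_of_lt_of_le hy.2 hb⟩ (hne y hy)).symm

lemma Haux_cont {x : ℝ} (hx : x ∈ Set.Ioo (-1:ℝ) 1) :
    ContinuousOn (Haux x) (Set.Icc (-1:ℝ) 1) := by
  have t1 : ContinuousOn (fun y : ℝ => (y - x) *
      Real.log (1 - x*y + Real.sqrt ((1 - x^2) * (1 - y^2)))) (Set.Icc (-1:ℝ) 1) := by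
    refine (continuous_id.sub continuous_const).continuousOn.mul (ContinuousOn.log ?_ ?_)
    · exact ((continuous_const.sub (continuous_const.mul continuous_id)).add
        (Real.continuous_sqrt.comp (by continuity))).continuousOn
    · exact fun y hy => (Apos hx hy).ne'
  have t2 : Continuous (fun y : ℝ => (y - x) * Real.log (y - x)) :=
    Real.continuous_mul_log.comp (continuous_id.sub continuous_const)
  have t3 : Continuous (fun y : ℝ => Real.sqrt (1 - x^2) * Real.arccos y) :=
    continuous_const.mul Real.continuous_arccos
  exact ((t1.sub t2.continuousOn).sub t3.continuousOn).div_const _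

lemma Haux_deriv (x y : ℝ) (hx : x ∈ Set.Ioo (-1:ℝ) 1) (hy : y ∈ Set.Ioo (-1:ℝ) 1)
    (hxy : y ≠ x) :
    HasDerivAt (Haux x) ((1 / Real.pi) * Real.log
      ((1 - x*y + Real.sqrt ((1 - x^2) * (1 - y^2))) / |x - y|)) y := by
  obtain ⟨hx1, hx2⟩ := hx
  obtain ⟨hy1, hy2⟩ := hy
  have hx2' : 0 < 1 - x^2 := by nlinarith
  have hy2' : 0 < 1 - y^2 := by nlinarith
  set s := Real.sqrt ((1 - x^2) * (1 - y^2)) with hs_def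
  have hs_pos : 0 < s := Real.sqrt_pos.2 (by positivity)
  have hs_sq : s^2 = (1 - x^2) * (1 - y^2) := Real.sq_sqrt (by positivity)
  have hA : 0 < 1 - x*y + s := by nlinarith [sq_nonneg (x - y), sq_nonneg (x + y)]
  have hyx : y - x ≠ 0 := sub_ne_zero.2 hxy
  -- derivative of inner polynomial
  have hp : HasDerivAt (fun y : ℝ => (1 - x^2) * (1 - y^2)) ((1 - x^2) * (-(2*y))) y := by
    have := (((hasDerivAt_pow 2 y).const_sub 1).const_mul (1 - x^2))
    simpa using this
  -- derivative of sqrt term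
  have hsd : HasDerivAt (fun y : ℝ => Real.sqrt ((1 - x^2) * (1 - y^2)))
      (-((1 - x^2) * y) / s) y := by
    have h := (Real.hasDerivAt_sqrt (x := (1 - x^2) * (1 - y^2)) (by positivity)).comp y hp
    refine h.congr_deriv ?_
    rw [← hs_def]
    field_simp
  -- derivative of log A term
  have hAin : HasDerivAt (fun y : ℝ => 1 - x*y + Real.sqrt ((1 - x^2) * (1 - y^2)))
      (-x + -((1 - x^2) * y) / s) y := by
    have h1 : HasDerivAt (fun y : ℝ => 1 - x*y) (-x) y := by
      simpa using ((hasDerivAt_id y).const_mul x).const_sub 1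
    exact h1.add hsd
  have hlogA : HasDerivAt (fun y : ℝ => Real.log (1 - x*y + Real.sqrt ((1 - x^2) * (1 - y^2))))
      ((-x + -((1 - x^2) * y) / s) / (1 - x*y + s)) y := by
    have := (Real.hasDerivAt_log (x := 1 - x*y + s) hA.ne').comp y hAin
    exact this.congr_deriv (by rw [div_eq_inv_mul _ (1 - x*y + s)])
  have hid : HasDerivAt (fun y : ℝ => y - x) 1 y := (hasDerivAt_id y).sub_const x
  have ht1 : HasDerivAt (fun y : ℝ => (y - x) * Real.log (1 - x*y + Real.sqrt ((1 - x^2) * (1 - y^2))))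
      (1 * Real.log (1 - x*y + s) + (y - x) * ((-x + -((1 - x^2) * y) / s) / (1 - x*y + s))) y := by
    have := hid.mul hlogA
    exact this
  have hlogB : HasDerivAt (fun y : ℝ => Real.log (y - x)) ((y - x)⁻¹) y := by
    have := (Real.hasDerivAt_log hyx).comp y hid
    exact this.congr_deriv (mul_one _)
  have ht2 : HasDerivAt (fun y : ℝ => (y - x) * Real.log (y - x))
      (1 * Real.log (y - x) + (y - x) * (y - x)⁻¹) y := hid.mul hlogB
  have ht3 : HasDerivAt (fun y : ℝ => Real.sqrt (1 - x^2) * Real.arccos y)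
      (Real.sqrt (1 - x^2) * (-(1 / Real.sqrt (1 - y^2)))) y :=
    (Real.hasDerivAt_arccos (by linarith) (by linarith)).const_mul _
  have hcomb := ((ht1.sub ht2).sub ht3).div_const Real.pi
  have : Haux x = fun y => ((y - x) * Real.log (1 - x*y + Real.sqrt ((1 - x^2) * (1 - y^2)))
    - (y - x) * Real.log (y - x) - Real.sqrt (1 - x^2) * Real.arccos y) / Real.pi := rfl
  rw [this]
  refine hcomb.congr_deriv ?_
  -- now the algebraic identity
  have hb : Real.sqrt (1 - x^2) * Real.sqrt (1 - y^2) = s := (Real.sqrt_mul hx2'.le _).symm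
  have hbpos : 0 < Real.sqrt (1 - y^2) := Real.sqrt_pos.2 hy2'
  have hapos : 0 < Real.sqrt (1 - x^2) := Real.sqrt_pos.2 hx2'
  have ha2 : (Real.sqrt (1 - x^2))^2 = 1 - x^2 := Real.sq_sqrt hx2'.le
  have hlog_split : Real.log ((1 - x*y + s) / |x - y|) = Real.log (1 - x*y + s) - Real.log (y - x) := by
    rw [Real.log_div hA.ne' (by simpa [sub_ne_zero] using (sub_ne_zero.2 hxy.symm : x - y ≠ 0)),
      abs_sub_comm, Real.log_abs]
  rw [hlog_split]
  have hkey : (y - x) * ((-x + -((1 - x^2) * y) / s) / (1 - x*y + s))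
      - (y - x) * (y - x)⁻¹ + Real.sqrt (1 - x^2) * (1 / Real.sqrt (1 - y^2)) = 0 := by
    have h1 : (y - x) * (y - x)⁻¹ = 1 := mul_inv_cancel₀ hyx
    rw [h1]
    have h2 : Real.sqrt (1 - x^2) * (1 / Real.sqrt (1 - y^2)) = (1 - x^2) / s := by
      rw [← hb]
      field_simp
      nlinarith [ha2]
    rw [h2]
    have hA' : 1 - y*x + s ≠ 0 := by rw [mul_comm]; exact hA.ne'
    field_simp
    nlinarith [hs_sq]
  have hE : 1 * Real.log (1 - x*y + s) + (y - x) * ((-x + -((1 - x^2) * y) / s) / (1 - x*y + s))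
      - (1 * Real.log (y - x) + (y - x) * (y - x)⁻¹)
      - Real.sqrt (1 - x^2) * (-(1 / Real.sqrt (1 - y^2)))
      = Real.log (1 - x*y + s) - Real.log (y - x) := by linear_combination hkey
  rw [hE]
  ring

lemma Haux_one (x : ℝ) : Haux x 1 = 0 := by
  norm_num [Haux, Real.arccos_one]

lemma Haux_neg_one {x : ℝ} (hx : x ∈ Set.Ioo (-1:ℝ) 1) :
    Haux x (-1) = -Real.sqrt (1 - x^2) := by
  have h : Real.log (-1 - x) = Real.log (1 + x) := by
    rw [show (-1 - x : ℝ) = -(1+x) by ring, Real.log_neg_eq_log]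
  have e : (1 : ℝ) - x*(-1) + Real.sqrt ((1 - x^2) * (1 - (-1:ℝ)^2)) = 1 + x := by norm_num
  rw [Haux, e, h, Real.arccos_neg_one]
  field_simp
  ring

theorem stmt_2 (x : ℝ) (hx : x ∈ Set.Ioo (-1:ℝ) 1) :
    ∫ y in (-1:ℝ)..1, G x y = Real.sqrt (1 - x^2) := by
  obtain ⟨hx1, hx2⟩ := hx
  have hx' : x ∈ Set.Ioo (-1:ℝ) 1 := ⟨hx1, hx2⟩
  have hi1 : IntervalIntegrable (fun y => G x y) volume (-1) x :=
    Gint hx' (by linarith) le_rfl (by linarith) (by linarith) le_rfl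
      (fun y hy => ne_of_lt hy.2)
  have hi2 : IntervalIntegrable (fun y => G x y) volume x 1 :=
    Gint hx' (by linarith) (by linarith) le_rfl le_rfl (by linarith)
      (fun y hy => ne_of_gt hy.1)
  have key1 : ∫ y in (-1:ℝ)..x, G x y = Haux x x - Haux x (-1) := by
    refine integral_eq_sub_of_hasDeriv_right_of_le (by linarith)
      ((Haux_cont hx').mono (Icc_subset_Icc le_rfl (by linarith))) (fun y hy => ?_) hi1
    have hyI : y ∈ Set.Ioo (-1:ℝ) 1 := ⟨hy.1, hy.2.trans hx2⟩
    have hd := Haux_deriv x y hx' hyI (ne_of_lt hy.2)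
    have hG : G x y = (1 / Real.pi) * Real.log
        ((1 - x*y + Real.sqrt ((1 - x^2) * (1 - y^2))) / |x - y|) := by
      rw [G, if_pos ⟨hx', hyI⟩]
    rw [hG]
    exact hd.hasDerivWithinAt
  have key2 : ∫ y in x..(1:ℝ), G x y = Haux x 1 - Haux x x := by
    refine integral_eq_sub_of_hasDeriv_right_of_le (by linarith)
      ((Haux_cont hx').mono (Icc_subset_Icc (by linarith) le_rfl)) (fun y hy => ?_) hi2
    have hyI : y ∈ Set.Ioo (-1:ℝ) 1 := ⟨hx1.trans hy.1, hy.2⟩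
    have hd := Haux_deriv x y hx' hyI (ne_of_gt hy.1)
    have hG : G x y = (1 / Real.pi) * Real.log
        ((1 - x*y + Real.sqrt ((1 - x^2) * (1 - y^2))) / |x - y|) := by
      rw [G, if_pos ⟨hx', hyI⟩]
    rw [hG]
    exact hd.hasDerivWithinAt
  rw [← integral_add_adjacent_intervals hi1 hi2, key1, key2, Haux_one, Haux_neg_one hx']
  ring
end

section
/- There exists a constant C > 0 such that for all x ∈ (-1,1) one has ∫_x^1 z·g(x,z) dz ≥ C·(1-x²)². -/
/-- The Green function `g(x,z)` for the operator `u ↦ (I u)'` on `(-1,1)`. -/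
noncomputable def g (x z : ℝ) : ℝ :=
  if x ∈ Set.Ioo (-1:ℝ) 1 then
    (1/2) * ((z - x) * G x z + (z + x) * G x (-z))
  else 0

open Real Set MeasureTheory

-- L1
lemma sinh_le_mul_cosh {t : ℝ} (ht : 0 ≤ t) : Real.sinh t ≤ t * Real.cosh t := by
  have hmono : MonotoneOn (fun t : ℝ => t * Real.cosh t - Real.sinh t) (Set.Ici (0:ℝ)) := by
    apply monotoneOn_of_deriv_nonneg (convex_Ici 0)
    · fun_prop
    · intro u hu
      exact (((hasDerivAt_id u).mul (Real.hasDerivAt_cosh u)).sub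
        (Real.hasDerivAt_sinh u)).differentiableAt.differentiableWithinAt
    · intro u hu
      rw [interior_Ici, mem_Ioi] at hu
      have h : HasDerivAt (fun t : ℝ => t * Real.cosh t - Real.sinh t)
          (1 * Real.cosh u + u * Real.sinh u - Real.cosh u) u :=
        ((hasDerivAt_id u).mul (Real.hasDerivAt_cosh u)).sub (Real.hasDerivAt_sinh u)
      rw [h.deriv]
      have := Real.sinh_pos_iff.2 hu
      nlinarith
  have h0 := hmono (Set.self_mem_Ici) (Set.mem_Ici.2 ht) ht
  simp only [Real.sinh_zero, Real.cosh_zero] at h0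
  nlinarith

-- L2
lemma mul_sinh_le {t1 t2 : ℝ} (h1 : 0 < t1) (h12 : t1 ≤ t2) :
    t2 * Real.sinh t1 ≤ t1 * Real.sinh t2 := by
  have hmono : MonotoneOn (fun t : ℝ => Real.sinh t / t) (Set.Ici t1) := by
    apply monotoneOn_of_deriv_nonneg (convex_Ici t1)
    · apply ContinuousOn.div Real.continuous_sinh.continuousOn continuousOn_id
      intro u hu; exact ne_of_gt (lt_of_lt_of_le h1 hu)
    · intro u hu
      rw [interior_Ici, mem_Ioi] at hu
      have hu0 : u ≠ 0 := ne_of_gt (h1.trans hu)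
      exact ((Real.hasDerivAt_sinh u).div (hasDerivAt_id u) hu0).differentiableAt.differentiableWithinAt
    · intro u hu
      rw [interior_Ici, mem_Ioi] at hu
      have hu0 : (0:ℝ) < u := h1.trans hu
      have h : HasDerivAt (fun t : ℝ => Real.sinh t / t)
          ((Real.cosh u * u - Real.sinh u * 1) / u ^ 2) u :=
        (Real.hasDerivAt_sinh u).div (hasDerivAt_id u) (ne_of_gt hu0)
      rw [h.deriv]
      apply div_nonneg _ (sq_nonneg u)
      have := sinh_le_mul_cosh hu0.le
      nlinarith
  have := hmono (Set.self_mem_Ici) (Set.mem_Ici.2 h12) h12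
  rw [div_le_div_iff₀ h1 (h1.trans_le h12)] at this
  linarith

lemma star_alg {x z s : ℝ} (hz : 0 < z) (hzx : z < x) (hx : x < 1)
    (hs : 0 < s) (hsq : s^2 = (1-x^2)*(1-z^2)) :
    (x - z) * Real.log ((1 - x*z + s)/(x - z)) ≤
    (x + z) * Real.log ((1 + x*z + s)/(x + z)) := by
  have hx0 : 0 < x := hz.trans hzx
  have hz1 : z < 1 := hzx.trans hx
  have hxz : 0 < x - z := by linarith
  have hxz' : 0 < x + z := by linarith
  have hx2 : 0 < (1-x^2) := by nlinarith
  have hz2 : 0 < (1-z^2) := by nlinarith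
  have hN1 : 0 < 1 - x*z + s := by nlinarith
  have hN2 : 0 < 1 + x*z + s := by nlinarith
  have hr1 : 1 < (1 + x*z + s)/(x + z) := by
    rw [lt_div_iff₀ hxz']; nlinarith
  have hr2 : 1 < (1 - x*z + s)/(x - z) := by
    rw [lt_div_iff₀ hxz]; nlinarith
  have hr12 : (1 + x*z + s)/(x + z) ≤ (1 - x*z + s)/(x - z) := by
    rw [div_le_div_iff₀ hxz' hxz]
    nlinarith [mul_pos hz hs, mul_pos hz hx2]
  set t1 := Real.log ((1 + x*z + s)/(x + z)) with ht1_def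
  set t2 := Real.log ((1 - x*z + s)/(x - z)) with ht2_def
  have ht1 : 0 < t1 := Real.log_pos hr1
  have ht12 : t1 ≤ t2 := Real.log_le_log (by linarith) hr12
  have hsinh1 : Real.sinh t1 = s / (x + z) := by
    rw [ht1_def, Real.sinh_log (by linarith), inv_div]
    rw [div_sub_div _ _ (ne_of_gt hxz') (ne_of_gt hN2)]
    have key : (1 + x*z + s) * (1 + x*z + s) - (x+z)*(x+z) = 2*s*(1 + x*z + s) := by
      linear_combination -hsq
    rw [key]
    field_simp
  have hsinh2 : Real.sinh t2 = s / (x - z) := by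
    rw [ht2_def, Real.sinh_log (by linarith), inv_div]
    rw [div_sub_div _ _ (ne_of_gt hxz) (ne_of_gt hN1)]
    have key : (1 - x*z + s) * (1 - x*z + s) - (x-z)*(x-z) = 2*s*(1 - x*z + s) := by
      linear_combination -hsq
    rw [key]
    field_simp
  have key := mul_sinh_le ht1 ht12
  rw [hsinh1, hsinh2, ← mul_div_assoc, ← mul_div_assoc, div_le_div_iff₀ hxz' hxz] at key
  rw [← mul_le_mul_iff_right₀ hs]
  nlinarith [key]

lemma star {x z : ℝ} (hz : 0 < z) (hzx : z < x) (hx : x < 1) :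
    (x - z) * Real.log ((1 - x*z + Real.sqrt ((1-x^2)*(1-z^2)))/(x - z)) ≤
    (x + z) * Real.log ((1 + x*z + Real.sqrt ((1-x^2)*(1-z^2)))/(x + z)) := by
  have hx0 : 0 < x := hz.trans hzx
  have hz1 : z < 1 := hzx.trans hx
  have hx2 : 0 < (1-x^2) := by nlinarith
  have hz2 : 0 < (1-z^2) := by nlinarith
  exact star_alg hz hzx hx (Real.sqrt_pos.2 (by positivity))
    (Real.sq_sqrt (by positivity))

lemma G_nonneg (x y : ℝ) : 0 ≤ G x y := by
  unfold G
  split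
  · next h =>
    obtain ⟨⟨hx1, hx2⟩, hy1, hy2⟩ := h
    rcases eq_or_ne x y with rfl | hne
    · simp
    · apply mul_nonneg (by positivity)
      apply Real.log_nonneg
      have habs : 0 < |x - y| := abs_pos.2 (sub_ne_zero.2 hne)
      rw [le_div_iff₀ habs, one_mul]
      have h1 : |x - y| ≤ 1 - x*y := by
        rw [abs_le]; constructor <;> nlinarith
      have h2 : 0 ≤ Real.sqrt ((1 - x^2) * (1 - y^2)) := Real.sqrt_nonneg _
      linarith
  · exact le_refl 0

lemma G_neg_neg (x y : ℝ) : G (-x) (-y) = G x y := by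
  unfold G
  have hc : ((-x) ∈ Set.Ioo (-1:ℝ) 1 ∧ (-y) ∈ Set.Ioo (-1:ℝ) 1) ↔
      (x ∈ Set.Ioo (-1:ℝ) 1 ∧ y ∈ Set.Ioo (-1:ℝ) 1) := by
    simp only [Set.mem_Ioo]
    constructor <;> rintro ⟨⟨a, b⟩, c, d⟩ <;>
      exact ⟨⟨by linarith, by linarith⟩, by linarith, by linarith⟩
  rw [show (-x)*(-y) = x*y by ring, show (1 - (-x)^2) = 1 - x^2 by ring,
    show (1 - (-y)^2) = 1 - y^2 by ring, show |(-x) - (-y)| = |x - y| by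
      rw [show (-x) - (-y) = -(x - y) by ring, abs_neg]]
  exact if_congr hc rfl rfl

lemma g_neg_left (x z : ℝ) : g (-x) z = g x z := by
  unfold g
  have hc : ((-x) ∈ Set.Ioo (-1:ℝ) 1) ↔ (x ∈ Set.Ioo (-1:ℝ) 1) := by
    simp only [Set.mem_Ioo]; constructor <;> rintro ⟨a, b⟩ <;> exact ⟨by linarith, by linarith⟩
  have h1 : G (-x) z = G x (-z) := by
    rw [← G_neg_neg x (-z), neg_neg]
  have h2 : G (-x) (-z) = G x z := G_neg_neg x z
  rw [h1, h2]
  rw [if_congr hc rfl rfl]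
  split
  · ring
  · rfl

lemma g_neg_right (x z : ℝ) : g x (-z) = - g x z := by
  unfold g
  split
  · rw [neg_neg]; ring
  · rw [neg_zero]

lemma g_nonneg_aux {x z : ℝ} (hx0 : 0 ≤ x) (hx1 : x < 1) (hz0 : 0 ≤ z) (hz1 : z < 1) :
    0 ≤ g x z := by
  have hxm : x ∈ Set.Ioo (-1:ℝ) 1 := ⟨by linarith, hx1⟩
  unfold g
  rw [if_pos hxm]
  rcases le_or_gt x z with h | h
  · have h1 : 0 ≤ (z - x) * G x z := mul_nonneg (by linarith) (G_nonneg _ _)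
    have h2 : 0 ≤ (z + x) * G x (-z) := mul_nonneg (by linarith) (G_nonneg _ _)
    linarith
  · -- z < x, so 0 ≤ z < x < 1
    rcases eq_or_lt_of_le hz0 with rfl | hz0'
    · rw [neg_zero]; ring_nf; exact le_refl 0
    · have hzm : z ∈ Set.Ioo (-1:ℝ) 1 := ⟨by linarith, hz1⟩
      have hzm' : -z ∈ Set.Ioo (-1:ℝ) 1 := ⟨by linarith, by linarith⟩
      have hG1 : G x z = (1/Real.pi) * Real.log ((1 - x*z + Real.sqrt ((1-x^2)*(1-z^2)))/(x - z)) := by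
        unfold G
        rw [if_pos ⟨hxm, hzm⟩, abs_of_pos (by linarith : (0:ℝ) < x - z)]
      have hG2 : G x (-z) = (1/Real.pi) * Real.log ((1 + x*z + Real.sqrt ((1-x^2)*(1-z^2)))/(x + z)) := by
        unfold G
        rw [if_pos ⟨hxm, hzm'⟩, abs_of_pos (by linarith : (0:ℝ) < x - -z)]
        rw [show x - -z = x + z by ring, show x * -z = -(x*z) by ring,
          show (1 - (-z)^2) = 1 - z^2 by ring, show 1 - -(x*z) = 1 + x*z by ring]
      rw [hG1, hG2]
      have key := star hz0' h hx1
      have hpi : (0:ℝ) ≤ 1/Real.pi := by positivity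
      set L1 := Real.log ((1 - x*z + Real.sqrt ((1-x^2)*(1-z^2)))/(x - z))
      set L2 := Real.log ((1 + x*z + Real.sqrt ((1-x^2)*(1-z^2)))/(x + z))
      have h3 : 0 ≤ (x + z) * L2 - (x - z) * L1 := by linarith
      have heq : (1/2) * ((z - x) * ((1/Real.pi) * L1) + (z + x) * ((1/Real.pi) * L2))
          = (1/Real.pi) * ((1/2) * ((x + z) * L2 - (x - z) * L1)) := by ring
      rw [heq]
      apply mul_nonneg hpi; linarith

lemma g_nonneg {x z : ℝ} (hx : x ∈ Set.Ioo (-1:ℝ) 1) (hz0 : 0 ≤ z) (hz1 : z < 1) :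
    0 ≤ g x z := by
  obtain ⟨hx1, hx2⟩ := hx
  rcases le_or_gt 0 x with h | h
  · exact g_nonneg_aux h hx2 hz0 hz1
  · rw [← g_neg_left x z]
    exact g_nonneg_aux (by linarith) (by linarith) hz0 hz1

lemma zg_nonneg {x z : ℝ} (hx : x ∈ Set.Ioo (-1:ℝ) 1) (hz0 : -1 ≤ z) (hz1 : z ≤ 1) :
    0 ≤ z * g x z := by
  have hb : ∀ w : ℝ, ¬ (w ∈ Set.Ioo (-1:ℝ) 1) → G x w = 0 := by
    intro w hw; unfold G; rw [if_neg]; tauto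
  rcases eq_or_lt_of_le hz1 with rfl | hz1'
  · have h1 : G x 1 = 0 := hb 1 (by simp)
    have h2 : G x (-1) = 0 := hb (-1) (by simp)
    unfold g; rw [if_pos hx, h1, h2]; ring_nf; exact le_refl 0
  rcases eq_or_lt_of_le hz0 with h | hz0'
  · have h1 : G x 1 = 0 := hb 1 (by simp)
    have h2 : G x (-1) = 0 := hb (-1) (by simp)
    unfold g; rw [← h, if_pos hx]
    rw [show -(-1:ℝ) = 1 by ring, h1, h2]; ring_nf; exact le_refl 0
  rcases lt_trichotomy z 0 with h | h | h
  · have hw : 0 ≤ (-z) * g x (-z) :=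
      mul_nonneg (by linarith) (g_nonneg hx (by linarith) (by linarith))
    rw [g_neg_right] at hw
    calc (0:ℝ) ≤ (-z) * (- g x z) := hw
    _ = z * g x z := by ring
  · rw [h]; simp
  · exact mul_nonneg h.le (g_nonneg hx h.le hz1')

lemma G_lower {a z : ℝ} (ha0 : 0 ≤ a) (ha1 : a < 1)
    (hz1 : (2*a+1)/3 ≤ z) (hz2 : z ≤ (a+2)/3) :
    Real.log (7/4) / Real.pi ≤ G a z := by
  have hz3 : (1:ℝ)/3 ≤ z := by linarith
  have hz4 : z ≤ 1 - (1-a)/3 := by linarith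
  have hza : (1-a)/3 ≤ z - a := by linarith
  have hza' : z - a ≤ 2*(1-a)/3 := by linarith
  have hzpos : 0 < z - a := by linarith
  have ham : a ∈ Set.Ioo (-1:ℝ) 1 := ⟨by linarith, ha1⟩
  have hzm : z ∈ Set.Ioo (-1:ℝ) 1 := ⟨by linarith, by linarith⟩
  unfold G
  rw [if_pos ⟨ham, hzm⟩]
  have habs : |a - z| = z - a := by
    rw [show a - z = -(z - a) by ring, abs_neg, abs_of_pos hzpos]
  rw [habs]
  -- sqrt lower bound
  have hs : (1-a)/2 ≤ Real.sqrt ((1 - a^2) * (1 - z^2)) := by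
    have h1 : ((1-a)/2)^2 ≤ (1 - a^2) * (1 - z^2) := by
      have hA : 1 - a ≤ 1 - a^2 := by nlinarith
      have hB : (1-a)*(4/9) ≤ 1 - z^2 := by
        nlinarith [mul_le_mul (show (1-a)/3 ≤ 1-z by linarith)
          (show (4:ℝ)/3 ≤ 1+z by linarith) (by norm_num : (0:ℝ) ≤ 4/3) (by linarith : (0:ℝ) ≤ 1-z)]
      nlinarith [mul_le_mul hA hB (by nlinarith : (0:ℝ) ≤ (1-a)*(4/9))
        (by nlinarith : (0:ℝ) ≤ 1-a^2), sq_nonneg (1-a)]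
    calc (1-a)/2 = Real.sqrt (((1-a)/2)^2) := by
          rw [Real.sqrt_sq (by linarith)]
    _ ≤ _ := Real.sqrt_le_sqrt h1
  have hnum : (7/4) * (z - a) ≤ 1 - a*z + Real.sqrt ((1 - a^2) * (1 - z^2)) := by
    have h1 : z - a ≤ 1 - a*z := by nlinarith
    have h2 : (3/4) * (z - a) ≤ (1-a)/2 := by linarith
    linarith
  have hratio : (7/4 : ℝ) ≤ (1 - a*z + Real.sqrt ((1 - a^2) * (1 - z^2))) / (z - a) := by
    rw [le_div_iff₀ hzpos]; linarith
  have hlog := Real.log_le_log (by norm_num) hratio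
  rw [div_eq_mul_inv, mul_comm, one_div]
  apply mul_le_mul_of_nonneg_left hlog (by positivity)

lemma zg_lower {x z : ℝ} (hx : x ∈ Set.Ioo (-1:ℝ) 1)
    (hz1 : (2*|x|+1)/3 ≤ z) (hz2 : z ≤ (|x|+2)/3) :
    Real.log (7/4) / Real.pi * (1 - |x|) / 18 ≤ z * g x z := by
  obtain ⟨hxa, hxb⟩ := hx
  set a := |x| with ha_def
  have ha0 : 0 ≤ a := abs_nonneg x
  have ha1 : a < 1 := abs_lt.2 ⟨hxa, hxb⟩
  have hz3 : (1:ℝ)/3 ≤ z := by linarith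
  have hza : (1-a)/3 ≤ z - a := by linarith
  have hxz1 : z - a ≤ z - x := by
    have := le_abs_self x; linarith
  have hxz2 : z - a ≤ z + x := by
    have := neg_abs_le x; linarith
  set c0 := Real.log (7/4) / Real.pi with hc0_def
  have hc0 : 0 < c0 := by
    apply div_pos (Real.log_pos (by norm_num)) Real.pi_pos
  have hGsum : c0 ≤ G x z + G x (-z) := by
    rcases le_or_gt 0 x with h | h
    · have hax : a = x := abs_of_nonneg h
      have := G_lower ha0 ha1 hz1 hz2
      rw [hax] at this
      have := G_nonneg x (-z)
      linarith
    · have hax : a = -x := abs_of_neg h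
      have h1 := G_lower ha0 ha1 hz1 hz2
      have h2 : G a z = G x (-z) := by
        rw [hax, ← G_neg_neg (-x) z, neg_neg]
      rw [h2] at h1
      have := G_nonneg x z
      linarith
  have hg : (z - a)/2 * (G x z + G x (-z)) ≤
      (1/2) * ((z - x) * G x z + (z + x) * G x (-z)) := by
    have h1 := G_nonneg x z
    have h2 := G_nonneg x (-z)
    nlinarith
  have hg2 : (z - a)/2 * c0 ≤ (z - a)/2 * (G x z + G x (-z)) := by
    apply mul_le_mul_of_nonneg_left hGsum (by linarith)
  have hgl : (1-a)/6 * c0 ≤ (z - a)/2 * c0 := by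
    apply mul_le_mul_of_nonneg_right _ hc0.le
    linarith
  have hgfin : (1-a)/6 * c0 ≤ g x z := by
    unfold g; rw [if_pos ⟨hxa, hxb⟩]; linarith
  have hgpos : 0 ≤ g x z := le_trans (mul_nonneg (by linarith) hc0.le) hgfin
  have h5 : (1/3) * g x z ≤ z * g x z := mul_le_mul_of_nonneg_right hz3 hgpos
  have h6 : (1/3) * ((1-a)/6 * c0) ≤ (1/3) * g x z :=
    mul_le_mul_of_nonneg_left hgfin (by norm_num)
  have h7 : c0 * (1-a) / 18 = (1/3) * ((1-a)/6 * c0) := by ring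
  linarith

noncomputable def Phi (x : ℝ) : ℝ → ℝ := fun z =>
  (1/(2*Real.pi)) * ( z*(z-x)*Real.log (1 - x*z + Real.sqrt ((1-x^2)*(1-z^2)))
      - z*((z-x)*Real.log (z-x))
      + z*(z+x)*Real.log (1 + x*z + Real.sqrt ((1-x^2)*(1-z^2)))
      - z*((z+x)*Real.log (z+x)) )

lemma Phi_contOn {x : ℝ} (hx : x ∈ Set.Ioo (-1:ℝ) 1) :
    ContinuousOn (Phi x) (Set.Icc x 1) := by
  obtain ⟨hx1, hx2⟩ := hx
  have hsq : Continuous fun z : ℝ => Real.sqrt ((1-x^2)*(1-z^2)) := by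
    apply Real.continuous_sqrt.comp; continuity
  have habs : |x| < 1 := abs_lt.2 ⟨hx1, hx2⟩
  have hbound : ∀ z ∈ Set.Icc x 1, x * z ≤ |x| := by
    intro z hz
    have hz1 : |z| ≤ 1 := abs_le.2 ⟨by linarith [hz.1], hz.2⟩
    calc x * z ≤ |x * z| := le_abs_self _
    _ = |x| * |z| := abs_mul x z
    _ ≤ |x| * 1 := by apply mul_le_mul_of_nonneg_left hz1 (abs_nonneg x)
    _ = |x| := mul_one _
  have hlog1 : ContinuousOn (fun z => Real.log (1 - x*z + Real.sqrt ((1-x^2)*(1-z^2)))) (Set.Icc x 1) := by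
    apply ContinuousOn.log
    · exact (continuous_const.sub (continuous_const.mul continuous_id)).add hsq |>.continuousOn
    · intro z hz
      have h1 := hbound z hz
      have h2 : 0 ≤ Real.sqrt ((1-x^2)*(1-z^2)) := Real.sqrt_nonneg _
      intro hzero; nlinarith
  have hlog2 : ContinuousOn (fun z => Real.log (1 + x*z + Real.sqrt ((1-x^2)*(1-z^2)))) (Set.Icc x 1) := by
    apply ContinuousOn.log
    · exact (continuous_const.add (continuous_const.mul continuous_id)).add hsq |>.continuousOn
    · intro z hz
      have h1 := hbound z hz
      have habs2 : -(x*z) ≤ |x| := by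
        have : |x*z| ≤ |x| := by
          rw [abs_mul]
          calc |x| * |z| ≤ |x| * 1 := by
                apply mul_le_mul_of_nonneg_left _ (abs_nonneg x)
                exact abs_le.2 ⟨by linarith [hz.1], hz.2⟩
          _ = |x| := mul_one _
        linarith [neg_abs_le (x*z), abs_le.1 this]
      have h2 : 0 ≤ Real.sqrt ((1-x^2)*(1-z^2)) := Real.sqrt_nonneg _
      intro hzero; nlinarith
  have hmul1 : Continuous (fun z : ℝ => (z-x)*Real.log (z-x)) :=
    Real.continuous_mul_log.comp (continuous_id.sub continuous_const)
  have hmul2 : Continuous (fun z : ℝ => (z+x)*Real.log (z+x)) :=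
    Real.continuous_mul_log.comp (continuous_id.add continuous_const)
  unfold Phi
  apply ContinuousOn.mul continuousOn_const
  apply ContinuousOn.sub
  apply ContinuousOn.add
  apply ContinuousOn.sub
  · exact (continuous_id.mul (continuous_id.sub continuous_const)).continuousOn.mul hlog1
  · exact (continuous_id.mul hmul1).continuousOn
  · exact (continuous_id.mul (continuous_id.add continuous_const)).continuousOn.mul hlog2
  · exact (continuous_id.mul hmul2).continuousOn

lemma zg_eq_Phi {x : ℝ} (hx : x ∈ Set.Ioo (-1:ℝ) 1) {z : ℝ}
    (hz : z ∈ Set.Ioc x 1) (hz1 : z ≠ 1) (hznx : z ≠ -x) :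
    z * g x z = Phi x z := by
  obtain ⟨hxa, hxb⟩ := hx
  obtain ⟨hza, hzb⟩ := hz
  have hzb' : z < 1 := lt_of_le_of_ne hzb hz1
  have hzIoo : z ∈ Set.Ioo (-1:ℝ) 1 := ⟨by linarith, hzb'⟩
  have hznIoo : -z ∈ Set.Ioo (-1:ℝ) 1 := ⟨by linarith, by linarith⟩
  have hzx : 0 < z - x := by linarith
  have hzxne : z + x ≠ 0 := fun h => hznx (by linarith)
  have habs1 : |x - z| = z - x := by
    rw [show x - z = -(z - x) by ring, abs_neg, abs_of_pos hzx]
  have hN1 : 0 < 1 - x*z + Real.sqrt ((1-x^2)*(1-z^2)) := by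
    have h2 : 0 ≤ Real.sqrt ((1-x^2)*(1-z^2)) := Real.sqrt_nonneg _
    nlinarith [abs_lt.2 ⟨hxa, hxb⟩, le_abs_self (x*z), abs_mul x z,
      mul_le_one₀ (le_of_lt (abs_lt.2 ⟨hxa, hxb⟩ : |x| < 1)) (abs_nonneg z)
        (abs_le.2 ⟨by linarith, by linarith⟩ : |z| ≤ 1)]
  have hN2 : 0 < 1 + x*z + Real.sqrt ((1-x^2)*(1-z^2)) := by
    have h2 : 0 ≤ Real.sqrt ((1-x^2)*(1-z^2)) := Real.sqrt_nonneg _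
    nlinarith [neg_abs_le (x*z), abs_mul x z,
      mul_le_one₀ (le_of_lt (abs_lt.2 ⟨hxa, hxb⟩ : |x| < 1)) (abs_nonneg z)
        (abs_le.2 ⟨by linarith, by linarith⟩ : |z| ≤ 1)]
  have hG1 : G x z = (1/Real.pi) * (Real.log (1 - x*z + Real.sqrt ((1-x^2)*(1-z^2)))
      - Real.log (z - x)) := by
    unfold G
    rw [if_pos ⟨⟨hxa, hxb⟩, hzIoo⟩, habs1, Real.log_div (ne_of_gt hN1) (ne_of_gt hzx)]
  have hG2 : G x (-z) = (1/Real.pi) * (Real.log (1 + x*z + Real.sqrt ((1-x^2)*(1-z^2)))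
      - Real.log (z + x)) := by
    unfold G
    rw [if_pos ⟨⟨hxa, hxb⟩, hznIoo⟩]
    rw [show x * -z = -(x*z) by ring, show (1:ℝ) - -(x*z) = 1 + x*z by ring,
      show ((-z:ℝ))^2 = z^2 by ring, show x - -z = z + x by ring]
    rw [Real.log_div (ne_of_gt hN2) (by rwa [abs_ne_zero]), Real.log_abs]
  unfold g
  rw [if_pos ⟨hxa, hxb⟩, hG1, hG2]
  unfold Phi
  have hpi : Real.pi ≠ 0 := Real.pi_ne_zero
  field_simp
  ring

lemma integrable_zg {x : ℝ} (hx : x ∈ Set.Ioo (-1:ℝ) 1) :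
    IntervalIntegrable (fun z => z * g x z) volume x 1 := by
  have hx1le : x ≤ 1 := le_of_lt hx.2
  have hPhi : IntervalIntegrable (Phi x) volume x 1 := by
    apply ContinuousOn.intervalIntegrable
    rw [Set.uIcc_of_le hx1le]
    exact Phi_contOn hx
  rw [intervalIntegrable_iff_integrableOn_Ioc_of_le hx1le] at hPhi ⊢
  apply hPhi.congr
  apply (ae_restrict_iff' measurableSet_Ioc).2
  have hcnt := (Set.toFinite ({-x, 1} : Set ℝ)).countable.ae_notMem (volume : Measure ℝ)
  filter_upwards [hcnt] with z hzmem hzIoc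
  simp only [Set.mem_insert_iff, Set.mem_singleton_iff, not_or] at hzmem
  exact (zg_eq_Phi hx hzIoc hzmem.2 hzmem.1).symm

theorem stmt_7 :
    ∃ C : ℝ, 0 < C ∧ ∀ x ∈ Set.Ioo (-1:ℝ) 1,
      C * (1 - x^2)^2 ≤ ∫ z in x..1, z * g x z := by
  set c0 := Real.log (7/4) / Real.pi with hc0_def
  have hc0 : 0 < c0 := div_pos (Real.log_pos (by norm_num)) Real.pi_pos
  refine ⟨c0 / 216, by positivity, ?_⟩
  intro x hx
  obtain ⟨hxa, hxb⟩ := hx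
  set a := |x| with ha_def
  have ha0 : 0 ≤ a := abs_nonneg x
  have ha1 : a < 1 := abs_lt.2 ⟨hxa, hxb⟩
  have hxa' : x ≤ a := le_abs_self x
  set p := (2*a+1)/3 with hp_def
  set q := (a+2)/3 with hq_def
  have hxp : x ≤ p := by rw [hp_def]; linarith
  have hpq : p ≤ q := by rw [hp_def, hq_def]; linarith
  have hq1 : q ≤ 1 := by rw [hq_def]; linarith
  have hx1le : x ≤ 1 := by linarith
  have hI := integrable_zg ⟨hxa, hxb⟩
  have hmem : ∀ r : ℝ, x ≤ r → r ≤ 1 → r ∈ Set.uIcc x 1 := by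
    intro r h1 h2; rw [Set.uIcc_of_le hx1le]; exact ⟨h1, h2⟩
  have hI1 : IntervalIntegrable (fun z => z * g x z) volume x p :=
    hI.mono_set (Set.uIcc_subset_uIcc (hmem x le_rfl hx1le) (hmem p hxp (by linarith)))
  have hI2 : IntervalIntegrable (fun z => z * g x z) volume p q :=
    hI.mono_set (Set.uIcc_subset_uIcc (hmem p hxp (by linarith)) (hmem q (by linarith) hq1))
  have hI3 : IntervalIntegrable (fun z => z * g x z) volume q 1 :=
    hI.mono_set (Set.uIcc_subset_uIcc (hmem q (by linarith) hq1) (hmem 1 hx1le le_rfl))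
  have hI23 : IntervalIntegrable (fun z => z * g x z) volume p 1 :=
    hI.mono_set (Set.uIcc_subset_uIcc (hmem p hxp (by linarith)) (hmem 1 hx1le le_rfl))
  have hsplit : ∫ z in x..1, z * g x z =
      (∫ z in x..p, z * g x z) + (∫ z in p..q, z * g x z) + (∫ z in q..1, z * g x z) := by
    rw [add_assoc, intervalIntegral.integral_add_adjacent_intervals hI2 hI3,
      intervalIntegral.integral_add_adjacent_intervals hI1 hI23]
  have hB1 : 0 ≤ ∫ z in x..p, z * g x z := by
    apply intervalIntegral.integral_nonneg hxp
    intro u hu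
    exact zg_nonneg ⟨hxa, hxb⟩ (by linarith [hu.1]) (by linarith [hu.2])
  have hB3 : 0 ≤ ∫ z in q..1, z * g x z := by
    apply intervalIntegral.integral_nonneg hq1
    intro u hu
    exact zg_nonneg ⟨hxa, hxb⟩ (by linarith [hu.1]) hu.2
  have hB2 : (q - p) * (c0 * (1 - a) / 18) ≤ ∫ z in p..q, z * g x z := by
    have hconst : ∫ _ in p..q, (c0 * (1 - a) / 18) = (q - p) • (c0 * (1 - a) / 18) :=
      intervalIntegral.integral_const _
    rw [smul_eq_mul] at hconst
    rw [← hconst]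
    apply intervalIntegral.integral_mono_on hpq intervalIntegrable_const hI2
    intro u hu
    have h1 : (2*|x|+1)/3 ≤ u := by rw [← ha_def]; exact hu.1
    have h2 : u ≤ (|x|+2)/3 := by rw [← ha_def]; exact hu.2
    exact zg_lower ⟨hxa, hxb⟩ h1 h2
  have hqp : q - p = (1 - a)/3 := by rw [hp_def, hq_def]; ring
  have hxsq : x^2 = a^2 := (sq_abs x).symm
  rw [hqp] at hB2
  have htot : c0 * (1-a)^2 / 54 ≤ ∫ z in x..1, z * g x z := by
    rw [hsplit]
    have heq : (1-a)/3 * (c0 * (1-a)/18) = c0 * (1-a)^2/54 := by ring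
    linarith
  rw [hxsq]
  have hfac : (0:ℝ) ≤ 4 - (1+a)^2 := by nlinarith
  nlinarith [mul_nonneg (mul_nonneg hc0.le (sq_nonneg (1-a))) hfac, htot]
end
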